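/- There are exactly 102 F3-admissible tuples (r, a, δφ, δF, δφF). (These tuples are the complete invariants labelling the connected components of moduli of positive real non-singular curves A ∈ |−2K_{F₃}|, equivalently of real K3 surfaces with non-symplectic involution of type (3,1,1).) -/

import Mathlib

/-- The invariants `(r, a, δφ, δF, δφF)` of the paper, with `r, a` integers and
`δφ, δF, δφF ∈ {0,1}`, satisfying conditions 0.1--0.7 and I.1--I.8 of the
`𝔽₃` case. -/
def F3Admissible : ℤ × ℤ × ℤ × ℤ × ℤ → Prop
  | (r, a, dphi, dF, dphiF) =>
    (dphi = 0 ∨ dphi = 1) ∧ (dF = 0 ∨ dF = 1) ∧ (dphiF = 0 ∨ dphiF = 1) ∧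
    -- 0.1
    (1 ≤ r ∧ r ≤ 18) ∧ (0 ≤ a ∧ a ≤ r ∧ a ≤ 20 - r) ∧
    -- 0.2
    (r + a ≡ 0 [ZMOD 2]) ∧ (dphi = 0 → r ≡ 2 [ZMOD 4]) ∧
    -- 0.3
    (a = 0 → dphi = 0 ∧ r ≡ 2 [ZMOD 8]) ∧
    -- 0.4
    (a = 1 → (r ≡ 1 [ZMOD 8] ∨ r ≡ 3 [ZMOD 8])) ∧
    -- 0.5
    (a = 2 ∧ r ≡ 6 [ZMOD 8] → dphi = 0) ∧
    -- 0.6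
    (a = r ∧ dphi = 0 → r ≡ 2 [ZMOD 8]) ∧
    -- 0.7
    (a = 20 - r ∧ dphi = 0 → r ≡ 2 [ZMOD 8]) ∧
    -- I.1
    (dF = 0 → dphi = 1) ∧
    -- I.2
    (dphiF = 0 → dF = 0 ∧ dphi = 1 ∧ r ≡ 1 [ZMOD 4]) ∧
    -- I.3
    (a = 20 - r → dF = 0) ∧
    -- I.4
    (a = 20 - r ∧ dphiF = 0 → r ≡ 1 [ZMOD 8]) ∧
    -- I.5
    (a = 0 → dF = 1) ∧
    -- I.6
    (a = 1 ∧ dF = 0 → dphiF = 0 ∧ r ≡ 1 [ZMOD 8]) ∧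
    -- I.7
    (a = 2 ∧ dF = 0 → (r ≡ 0 [ZMOD 8] ∨ r ≡ 2 [ZMOD 8])) ∧
    -- I.8
    (a = 3 ∧ dF = 0 ∧ r ≡ 5 [ZMOD 8] → dphiF = 0)


instance F3Admissible.decPred : DecidablePred F3Admissible := fun t =>
  match t with
  | (r, a, dphi, dF, dphiF) => by unfold F3Admissible; infer_instance

/-- A bounding box containing all `F3Admissible` tuples. -/
noncomputable def F3Box : Finset (ℤ × ℤ × ℤ × ℤ × ℤ) :=
  (Finset.Icc 1 18) ×ˢ (Finset.Icc 0 19) ×ˢ ({0,1} : Finset ℤ) ×ˢ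
    ({0,1} : Finset ℤ) ×ˢ ({0,1} : Finset ℤ)

/-- There are exactly 102 `𝔽₃`-admissible tuples `(r, a, δφ, δF, δφF)`:
these label the connected components of moduli of positive real non-singular
curves `A ∈ |-2K_{𝔽₃}|`, equivalently of real K3 surfaces with non-symplectic
involution of type `(3,1,1)`. -/
theorem card_F3Admissible :
    Set.ncard {t : ℤ × ℤ × ℤ × ℤ × ℤ | F3Admissible t} = 102 := by
  have h : {t : ℤ × ℤ × ℤ × ℤ × ℤ | F3Admissible t}
      = ↑(F3Box.filter F3Admissible) := by
    ext ⟨r, a, dphi, dF, dphiF⟩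
    simp only [Set.mem_setOf_eq, Finset.coe_filter, Finset.mem_coe,
      Finset.mem_filter, F3Box, Finset.mem_product, Finset.mem_Icc,
      Finset.mem_insert, Finset.mem_singleton]
    constructor
    · intro h
      have hr := h.2.2.2.1
      have ha := h.2.2.2.2.1
      exact ⟨⟨hr, ⟨ha.1, by omega⟩, h.1, h.2.1, h.2.2.1⟩, h⟩
    · exact fun h => h.2
  rw [h, Set.ncard_coe_finset]
  set_option maxRecDepth 100000 in
  set_option maxHeartbeats 4000000 in
  decide
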